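/- Consider a linear model with orthogonal design X′X = nI_p, response Y ∈ ℝ^n, tuning vector Λ = (λ₁,…,λ_p) with λ₁ ≥ … ≥ λ_p ≥ 0, OLS estimator β̂^OLS = (1/n)X′Y and SLOPE estimator β̂^SLOPE. Let π be a permutation of (1,…,p) with |β̂^OLS_{π(1)}| ≥ … ≥ |β̂^OLS_{π(p)}|, and suppose the true support is {1,…,p₀} with p₀ < p. Then supp(β̂^SLOPE) = {1,…,p₀} (i.e. β̂^SLOPE_i = 0 exactly for i > p₀) if and only if: (a) min_{1≤i≤p₀} |β̂^OLS_i| > max_{p₀+1≤i≤p} |β̂^OLS_i|; (b) Σ_{i=k}^{p₀} |β̂^OLS_{π(i)}| > (1/n) Σ_{i=k}^{p₀} λ_i for every k = 1,…,p₀; and (c) Σ_{i=p₀+1}^{k} |β̂^OLS_{π(i)}| ≤ (1/n) Σ_{i=p₀+1}^{k} λ_i for every k = p₀+1,…,p. -/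

import Mathlib

open Matrix

/-- The SLOPE (sorted ℓ₁) norm `J_Λ(b) = ∑ Λᵢ |b|₍ᵢ₎`, expressed (for `Λ` sorted
in decreasing order) as the maximum over permutations of `∑ Λᵢ |b (σ i)|`. -/
noncomputable def slopeNorm {p : ℕ} (Λ : Fin p → ℝ) (b : Fin p → ℝ) : ℝ :=
  ⨆ σ : Equiv.Perm (Fin p), ∑ i, Λ i * |b (σ i)|

/-- The SLOPE objective function `b ↦ ½‖Y - Xb‖₂² + J_Λ(b)`. -/
noncomputable def slopeObj {n p : ℕ} (X : Matrix (Fin n) (Fin p) ℝ) (Y : Fin n → ℝ)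
    (Λ : Fin p → ℝ) (b : Fin p → ℝ) : ℝ :=
  (1 / 2) * ∑ i, (Y i - (X *ᵥ b) i) ^ 2 + slopeNorm Λ b

namespace SlopeAux

variable {p : ℕ}

lemma sum_le_slopeNorm (Λ b : Fin p → ℝ) (σ : Equiv.Perm (Fin p)) :
    ∑ i, Λ i * |b (σ i)| ≤ slopeNorm Λ b :=
  le_ciSup (f := fun σ : Equiv.Perm (Fin p) => ∑ i, Λ i * |b (σ i)|)
    (Set.Finite.bddAbove (Set.finite_range _)) σ

lemma slopeNorm_le {Λ b : Fin p → ℝ} {M : ℝ}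
    (h : ∀ σ : Equiv.Perm (Fin p), ∑ i, Λ i * |b (σ i)| ≤ M) : slopeNorm Λ b ≤ M :=
  ciSup_le h

lemma slopeNorm_congr (Λ : Fin p → ℝ) {b c : Fin p → ℝ} (e : Equiv.Perm (Fin p))
    (h : ∀ i, |b (e i)| = |c i|) : slopeNorm Λ b = slopeNorm Λ c := by
  apply le_antisymm
  · apply slopeNorm_le; intro σ
    have he : ∑ i, Λ i * |b (σ i)| = ∑ i, Λ i * |c ((σ.trans e⁻¹) i)| := by
      refine Finset.sum_congr rfl fun i _ => ?_
      have h2 := h (e⁻¹ (σ i))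
      rw [show e (e⁻¹ (σ i)) = σ i from e.apply_symm_apply _] at h2
      simp [Equiv.trans_apply, h2]
    rw [he]; exact sum_le_slopeNorm Λ c _
  · apply slopeNorm_le; intro σ
    have he : ∑ i, Λ i * |c (σ i)| = ∑ i, Λ i * |b ((σ.trans e) i)| := by
      refine Finset.sum_congr rfl fun i _ => ?_
      simp [Equiv.trans_apply, h (σ i)]
    rw [he]; exact sum_le_slopeNorm Λ b _

lemma slopeNorm_eq_sum {Λ b : Fin p → ℝ} (hΛ : Antitone Λ)
    (hb : Antitone b) (hb0 : ∀ i, 0 ≤ b i) : slopeNorm Λ b = ∑ i, Λ i * b i := by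
  have hmono : Monovary Λ b := by
    intro i j hij
    rcases le_or_gt i j with h | h
    · exact absurd (hb h) (not_le.2 hij)
    · exact hΛ h.le
  apply le_antisymm
  · apply slopeNorm_le; intro σ
    have : ∑ i, Λ i * |b (σ i)| = ∑ i, Λ i * b (σ i) :=
      Finset.sum_congr rfl fun i _ => by rw [abs_of_nonneg (hb0 _)]
    rw [this]
    exact hmono.sum_smul_comp_perm_le_sum_smul
  · have : ∑ i, Λ i * b i = ∑ i, Λ i * |b ((1 : Equiv.Perm (Fin p)) i)| :=
      Finset.sum_congr rfl fun i _ => by simp [abs_of_nonneg (hb0 i)]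
    rw [this]; exact sum_le_slopeNorm Λ b 1

noncomputable def Fo (γ : ℝ) (Λ β b : Fin p → ℝ) : ℝ :=
  γ / 2 * ∑ i, (b i - β i) ^ 2 + slopeNorm Λ b

lemma slopeNorm_comb {Λ : Fin p → ℝ} (hΛ0 : ∀ i, 0 ≤ Λ i) (x y : Fin p → ℝ) {t : ℝ}
    (ht0 : 0 ≤ t) (ht1 : t ≤ 1) :
    slopeNorm Λ (fun i => x i + t * (y i - x i))
      ≤ (1 - t) * slopeNorm Λ x + t * slopeNorm Λ y := by
  apply slopeNorm_le; intro σ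
  have h1 : ∑ i, Λ i * |x (σ i) + t * (y (σ i) - x (σ i))|
      ≤ ∑ i, ((1 - t) * (Λ i * |x (σ i)|) + t * (Λ i * |y (σ i)|)) := by
    refine Finset.sum_le_sum fun i _ => ?_
    have habs : |x (σ i) + t * (y (σ i) - x (σ i))| ≤ (1 - t) * |x (σ i)| + t * |y (σ i)| := by
      have : x (σ i) + t * (y (σ i) - x (σ i)) = (1 - t) * x (σ i) + t * y (σ i) := by ring
      rw [this]
      calc |(1 - t) * x (σ i) + t * y (σ i)| ≤ |(1 - t) * x (σ i)| + |t * y (σ i)| := abs_add_le _ _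
        _ = (1 - t) * |x (σ i)| + t * |y (σ i)| := by
            rw [abs_mul, abs_mul, abs_of_nonneg (by linarith), abs_of_nonneg ht0]
    nlinarith [hΛ0 i, abs_nonneg (x (σ i)), abs_nonneg (y (σ i))]
  rw [Finset.sum_add_distrib, ← Finset.mul_sum, ← Finset.mul_sum] at h1
  calc ∑ i, Λ i * |x (σ i) + t * (y (σ i) - x (σ i))|
      ≤ (1 - t) * ∑ i, Λ i * |x (σ i)| + t * ∑ i, Λ i * |y (σ i)| := h1
    _ ≤ (1 - t) * slopeNorm Λ x + t * slopeNorm Λ y := by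
        have := sum_le_slopeNorm Λ x σ
        have := sum_le_slopeNorm Λ y σ
        nlinarith

lemma fo_vi {γ : ℝ} (hγ : 0 < γ) {Λ β bs : Fin p → ℝ} (hΛ0 : ∀ i, 0 ≤ Λ i)
    (hmin : ∀ x, Fo γ Λ β bs ≤ Fo γ Λ β x) (c : Fin p → ℝ) :
    0 ≤ γ * ∑ i, (bs i - β i) * (c i - bs i) + (slopeNorm Λ c - slopeNorm Λ bs) := by
  set A : ℝ := ∑ i, (bs i - β i) * (c i - bs i) with hA
  set D : ℝ := ∑ i, (c i - bs i) ^ 2 with hD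
  have hD0 : 0 ≤ D := Finset.sum_nonneg fun i _ => sq_nonneg _
  have key : ∀ t : ℝ, 0 < t → t ≤ 1 →
      0 ≤ γ * A + γ / 2 * t * D + (slopeNorm Λ c - slopeNorm Λ bs) := by
    intro t ht0 ht1
    have h1 := hmin (fun i => bs i + t * (c i - bs i))
    have h2 := slopeNorm_comb hΛ0 bs c ht0.le ht1
    have hq : ∑ i, ((bs i + t * (c i - bs i)) - β i) ^ 2
        = ∑ i, (bs i - β i) ^ 2 + 2 * t * A + t ^ 2 * D := by
      rw [hA, hD, Finset.mul_sum, Finset.mul_sum, ← Finset.sum_add_distrib,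
        ← Finset.sum_add_distrib]
      exact Finset.sum_congr rfl fun i _ => by ring
    rw [Fo, Fo, hq] at h1
    have h3 : 0 ≤ γ / 2 * (2 * t * A + t ^ 2 * D) + t * (slopeNorm Λ c - slopeNorm Λ bs) := by
      nlinarith [h1, h2]
    have h4 : 0 ≤ t * (γ * A + γ / 2 * t * D + (slopeNorm Λ c - slopeNorm Λ bs)) := by
      nlinarith [h3]
    nlinarith [h4, ht0]
  by_contra hcon
  push_neg at hcon
  set E : ℝ := γ * A + (slopeNorm Λ c - slopeNorm Λ bs) with hE
  have hElt : E < 0 := hcon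
  set d : ℝ := γ / 2 * D with hd
  have hd0 : 0 ≤ d := by positivity
  set t : ℝ := min 1 ((-E) / (d + 1)) with htdef
  have ht0 : 0 < t := lt_min one_pos (div_pos (by linarith) (by linarith))
  have ht1 : t ≤ 1 := min_le_left _ _
  have htle : t * (d + 1) ≤ -E := by
    rw [← le_div_iff₀ (by linarith : (0:ℝ) < d + 1)]
    exact min_le_right _ _
  have htd : t * d < -E := by nlinarith
  have hk := key t ht0 ht1
  have : γ * A + γ / 2 * t * D + (slopeNorm Λ c - slopeNorm Λ bs) = E + t * d := by
    rw [hE, hd]; ring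
  rw [this] at hk
  linarith

lemma fo_unique {γ : ℝ} (hγ : 0 < γ) {Λ β b1 b2 : Fin p → ℝ} (hΛ0 : ∀ i, 0 ≤ Λ i)
    (h1 : ∀ x, Fo γ Λ β b1 ≤ Fo γ Λ β x) (h2 : ∀ x, Fo γ Λ β b2 ≤ Fo γ Λ β x) : b1 = b2 := by
  set m : Fin p → ℝ := fun i => b1 i + (1/2 : ℝ) * (b2 i - b1 i) with hm
  have hJ : slopeNorm Λ m ≤ (1 - 1/2) * slopeNorm Λ b1 + (1/2) * slopeNorm Λ b2 :=
    slopeNorm_comb hΛ0 b1 b2 (by norm_num) (by norm_num)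
  have hq : ∑ i, (m i - β i) ^ 2
      = ∑ i, ((1/2) * (b1 i - β i) ^ 2 + (1/2) * (b2 i - β i) ^ 2
          - (1/4) * (b1 i - b2 i) ^ 2) := by
    exact Finset.sum_congr rfl fun i _ => by rw [hm]; ring
  have hqs : ∑ i, (m i - β i) ^ 2
      = (1/2) * ∑ i, (b1 i - β i) ^ 2 + (1/2) * ∑ i, (b2 i - β i) ^ 2
        - (1/4) * ∑ i, (b1 i - b2 i) ^ 2 := by
    rw [hq, Finset.sum_sub_distrib, Finset.sum_add_distrib, ← Finset.mul_sum, ← Finset.mul_sum,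
      ← Finset.mul_sum]
  have e12 : Fo γ Λ β b1 = Fo γ Λ β b2 := le_antisymm (h1 b2) (h2 b1)
  have hms := h1 m
  rw [Fo, Fo, hqs] at hms
  have hsum0 : ∑ i, (b1 i - b2 i) ^ 2 ≤ 0 := by
    simp only [Fo] at e12
    by_contra hpos
    push_neg at hpos
    nlinarith [hms, hJ, e12, mul_pos hγ hpos]
  have hz : ∀ i ∈ Finset.univ, (b1 i - b2 i) ^ 2 = 0 := by
    intro i _
    have := Finset.sum_nonneg (fun j (_ : j ∈ (Finset.univ : Finset (Fin p))) =>
      sq_nonneg (b1 j - b2 j))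
    have hle : (b1 i - b2 i) ^ 2 ≤ ∑ j, (b1 j - b2 j) ^ 2 :=
      Finset.single_le_sum (f := fun j => (b1 j - b2 j) ^ 2) (fun j _ => sq_nonneg _)
        (Finset.mem_univ i)
    nlinarith [sq_nonneg (b1 i - b2 i)]
  funext i
  have := hz i (Finset.mem_univ i)
  have := sq_eq_zero_iff.1 this
  linarith [this]

/-- the sign used to align with `β`. -/
noncomputable def sgn (β : Fin p → ℝ) (i : Fin p) : ℝ := if β i < 0 then -1 else 1

lemma sgn_mul_self (β : Fin p → ℝ) (i : Fin p) : sgn β i * β i = |β i| := by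
  rw [sgn]; rcases lt_or_ge (β i) 0 with h | h
  · simp [h, abs_of_neg h]
  · simp [not_lt.2 h, abs_of_nonneg h]

lemma sgn_sq (β : Fin p → ℝ) (i : Fin p) : sgn β i ^ 2 = 1 := by
  rw [sgn]; split <;> norm_num

lemma abs_sgn_mul (β : Fin p → ℝ) (i : Fin p) (x : ℝ) : |sgn β i * x| = |x| := by
  rw [abs_mul, sgn]; split <;> simp

/-- the two-point sign-aligned exchange of `bs` at `i j`. -/
noncomputable def exch (β bs : Fin p → ℝ) (i j : Fin p) : Fin p → ℝ :=
  Function.update (Function.update bs i (sgn β i * |bs j|)) j (sgn β j * |bs i|)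

lemma exch_apply_i {β bs : Fin p → ℝ} {i j : Fin p} (hij : i ≠ j) :
    exch β bs i j i = sgn β i * |bs j| := by
  rw [exch, Function.update_of_ne hij, Function.update_self]

lemma exch_apply_j {β bs : Fin p → ℝ} {i j : Fin p} :
    exch β bs i j j = sgn β j * |bs i| := by
  rw [exch, Function.update_self]

lemma exch_apply_other {β bs : Fin p → ℝ} {i j l : Fin p} (hli : l ≠ i) (hlj : l ≠ j) :
    exch β bs i j l = bs l := by
  rw [exch, Function.update_of_ne hlj, Function.update_of_ne hli]

lemma slopeNorm_exch (Λ : Fin p → ℝ) {β bs : Fin p → ℝ} {i j : Fin p} (hij : i ≠ j) :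
    slopeNorm Λ (exch β bs i j) = slopeNorm Λ bs := by
  refine slopeNorm_congr Λ (Equiv.swap i j) fun l => ?_
  rcases eq_or_ne l i with rfl | hli
  · rw [Equiv.swap_apply_left, exch_apply_j, abs_sgn_mul, abs_abs]
  · rcases eq_or_ne l j with rfl | hlj
    · rw [Equiv.swap_apply_right, exch_apply_i hij, abs_sgn_mul, abs_abs]
    · rw [Equiv.swap_apply_of_ne_of_ne hli hlj, exch_apply_other hli hlj]

lemma sum_exch {β bs : Fin p → ℝ} {i j : Fin p} (hij : i ≠ j) :
    ∑ l, (exch β bs i j l - β l) ^ 2 = ∑ l, (bs l - β l) ^ 2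
      + ((sgn β i * |bs j| - β i) ^ 2 - (bs i - β i) ^ 2)
      + ((sgn β j * |bs i| - β j) ^ 2 - (bs j - β j) ^ 2) := by
  set g : Fin p → ℝ := fun l => (exch β bs i j l - β l) ^ 2 - (bs l - β l) ^ 2 with hg
  have h1 : ∑ l, (exch β bs i j l - β l) ^ 2 = ∑ l, ((bs l - β l) ^ 2 + g l) :=
    Finset.sum_congr rfl fun l _ => by rw [hg]; ring
  have h2 : ∑ l, g l = g i + g j := by
    rw [← Finset.sum_pair hij]
    refine (Finset.sum_subset (Finset.subset_univ _) fun x _ hx => ?_).symm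
    simp only [Finset.mem_insert, Finset.mem_singleton, not_or] at hx
    rw [hg]
    simp only [exch_apply_other hx.1 hx.2, sub_self]
  rw [h1, Finset.sum_add_distrib, h2, hg]
  simp only [exch_apply_i hij, exch_apply_j]
  ring

lemma exch_sq_i {β bs : Fin p → ℝ} (i j : Fin p) :
    (sgn β i * |bs j| - β i) ^ 2 = bs j ^ 2 - 2 * |bs j| * |β i| + β i ^ 2 := by
  have h : (sgn β i * |bs j| - β i) ^ 2
      = sgn β i ^ 2 * |bs j| ^ 2 - 2 * |bs j| * (sgn β i * β i) + β i ^ 2 := by ring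
  rw [h, sgn_sq, sgn_mul_self, one_mul, sq_abs]

lemma fo_monovary {γ : ℝ} (hγ : 0 < γ) {Λ β bs : Fin p → ℝ}
    (hmin : ∀ x, Fo γ Λ β bs ≤ Fo γ Λ β x) (i j : Fin p) :
    0 ≤ (|bs i| - |bs j|) * (|β i| - |β j|) := by
  rcases eq_or_ne i j with rfl | hij
  · simp
  have h := hmin (exch β bs i j)
  rw [Fo, Fo, slopeNorm_exch Λ hij, sum_exch hij, exch_sq_i i j, exch_sq_i j i] at h
  have habsi : bs i * β i ≤ |bs i| * |β i| := by
    rw [← abs_mul]; exact le_abs_self _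
  have habsj : bs j * β j ≤ |bs j| * |β j| := by
    rw [← abs_mul]; exact le_abs_self _
  nlinarith [h, hγ, sq_abs (bs i), sq_abs (bs j)]

lemma fo_tie {γ : ℝ} (hγ : 0 < γ) {Λ β bs : Fin p → ℝ} (hΛ0 : ∀ i, 0 ≤ Λ i)
    (hmin : ∀ x, Fo γ Λ β bs ≤ Fo γ Λ β x) {i j : Fin p} (hij : i ≠ j)
    (hββ : |β i| = |β j|) : |bs i| = |bs j| := by
  have habsi : bs i * β i ≤ |bs i| * |β i| := by
    rw [← abs_mul]; exact le_abs_self _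
  have habsj : bs j * β j ≤ |bs j| * |β j| := by
    rw [← abs_mul]; exact le_abs_self _
  have hle : Fo γ Λ β (exch β bs i j) ≤ Fo γ Λ β bs := by
    rw [Fo, Fo, slopeNorm_exch Λ hij, sum_exch hij, exch_sq_i i j, exch_sq_i j i]
    have hkey : bs j ^ 2 - 2 * |bs j| * |β i| + β i ^ 2 - (bs i - β i) ^ 2
        + (bs i ^ 2 - 2 * |bs i| * |β j| + β j ^ 2 - (bs j - β j) ^ 2) ≤ 0 := by
      have e1 : |bs i| * |β j| = |bs i| * |β i| := by rw [hββ]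
      have e2 : |bs j| * |β j| = |bs j| * |β i| := by rw [hββ]
      nlinarith [sq_abs (bs i), sq_abs (bs j), e1, e2, habsi, habsj]
    nlinarith [hkey, hγ]
  have hmin' : ∀ x, Fo γ Λ β (exch β bs i j) ≤ Fo γ Λ β x := fun x => hle.trans (hmin x)
  have heq : bs = exch β bs i j := fo_unique hγ hΛ0 hmin hmin'
  have hj := congrFun heq j
  rw [exch_apply_j] at hj
  have h2 : |bs j| = |bs i| := by rw [hj, abs_sgn_mul, abs_abs]
  exact h2.symm

lemma fo_reduce {γ : ℝ} (hγ : 0 < γ) {Λ β bs : Fin p → ℝ}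
    (hmin : ∀ x, Fo γ Λ β bs ≤ Fo γ Λ β x) (τ : Equiv.Perm (Fin p)) (c : Fin p → ℝ) :
    Fo γ Λ (fun j => |β (τ j)|) (fun j => |bs (τ j)|) ≤ Fo γ Λ (fun j => |β (τ j)|) c := by
  set bc : Fin p → ℝ := fun i => sgn β i * c (τ.symm i) with hbc
  have step1 : Fo γ Λ (fun j => |β (τ j)|) (fun j => |bs (τ j)|) ≤ Fo γ Λ β bs := by
    rw [Fo, Fo]
    have hJ : slopeNorm Λ (fun j => |bs (τ j)|) = slopeNorm Λ bs := by
      refine (slopeNorm_congr Λ τ fun l => ?_).symm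
      rw [abs_abs]
    rw [hJ]
    have hq : ∑ l, (|bs (τ l)| - |β (τ l)|) ^ 2 ≤ ∑ l, (bs l - β l) ^ 2 := by
      rw [Equiv.sum_comp τ (fun l => (|bs l| - |β l|) ^ 2)]
      refine Finset.sum_le_sum fun l _ => ?_
      have : bs l * β l ≤ |bs l| * |β l| := by rw [← abs_mul]; exact le_abs_self _
      nlinarith [sq_abs (bs l), sq_abs (β l)]
    nlinarith [hq, hγ]
  have step3 : Fo γ Λ β bc = Fo γ Λ (fun j => |β (τ j)|) c := by
    rw [Fo, Fo]
    have hJ : slopeNorm Λ bc = slopeNorm Λ c := by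
      refine slopeNorm_congr Λ τ fun l => ?_
      rw [hbc]
      simp only [Equiv.symm_apply_apply]
      rw [abs_sgn_mul]
    rw [hJ]
    have hq : ∑ l, (bc l - β l) ^ 2 = ∑ l, (c l - |β (τ l)|) ^ 2 := by
      rw [← Equiv.sum_comp τ (fun l => (bc l - β l) ^ 2)]
      refine Finset.sum_congr rfl fun l _ => ?_
      rw [hbc]
      simp only [Equiv.symm_apply_apply]
      have h : (sgn β (τ l) * c l - β (τ l)) ^ 2
          = sgn β (τ l) ^ 2 * c l ^ 2 - 2 * c l * (sgn β (τ l) * β (τ l)) + β (τ l) ^ 2 := by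
        ring
      rw [h, sgn_sq, sgn_mul_self, one_mul, ← sq_abs (β (τ l))]
      ring
    rw [hq]
  calc Fo γ Λ (fun j => |β (τ j)|) (fun j => |bs (τ j)|) ≤ Fo γ Λ β bs := step1
    _ ≤ Fo γ Λ β bc := hmin bc
    _ = Fo γ Λ (fun j => |β (τ j)|) c := step3

lemma sum_mul_ite (f : Fin p → ℝ) (P : Fin p → Prop) [DecidablePred P] (ε : ℝ) :
    ∑ i, f i * (if P i then ε else 0) = ε * ∑ i ∈ Finset.univ.filter P, f i := by
  rw [Finset.sum_filter, Finset.mul_sum]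
  refine Finset.sum_congr rfl fun i _ => ?_
  split <;> ring

end SlopeAux

open SlopeAux in
set_option maxHeartbeats 2000000 in
/-- Support recovery by SLOPE in the orthogonal design, with `τ` a permutation
sorting `|β̂OLS|` decreasingly and the true support being the first `p₀`
coordinates (0-based: indices `i` with `(i : ℕ) < p₀`): SLOPE recovers the support,
i.e. `β̂SLOPE_i = 0 ⟺ p₀ ≤ i`, if and only if
(a) `min_{i < p₀} |β̂OLS_i| > max_{i ≥ p₀} |β̂OLS_i|`,
(b) for every `k < p₀`: `∑_{k ≤ i < p₀} |β̂OLS_{τ(i)}| > (1/n) ∑_{k ≤ i < p₀} Λ_i`,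
(c) for every `p₀ ≤ k < p`: `∑_{p₀ ≤ i ≤ k} |β̂OLS_{τ(i)}| ≤ (1/n) ∑_{p₀ ≤ i ≤ k} Λ_i`. -/
theorem slope_support_recovery_iff {n p : ℕ} (hn : 0 < n)
    (X : Matrix (Fin n) (Fin p) ℝ) (Y : Fin n → ℝ)
    (hX : Xᵀ * X = (n : ℝ) • (1 : Matrix (Fin p) (Fin p) ℝ))
    (Λ : Fin p → ℝ) (hΛanti : Antitone Λ) (hΛnonneg : ∀ i, 0 ≤ Λ i)
    (βOLS : Fin p → ℝ) (hOLS : βOLS = (1 / (n : ℝ)) • (Xᵀ *ᵥ Y))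
    (βS : Fin p → ℝ) (hβS : ∀ b, slopeObj X Y Λ βS ≤ slopeObj X Y Λ b)
    (τ : Equiv.Perm (Fin p))
    (hτ : ∀ i j : Fin p, i ≤ j → |βOLS (τ j)| ≤ |βOLS (τ i)|)
    (p₀ : ℕ) (hp₀ : p₀ < p) :
    (∀ i : Fin p, βS i = 0 ↔ p₀ ≤ (i : ℕ)) ↔
      ((∀ i j : Fin p, (i : ℕ) < p₀ → p₀ ≤ (j : ℕ) → |βOLS j| < |βOLS i|) ∧
       (∀ k : ℕ, k < p₀ →
         (1 / (n : ℝ)) * ∑ i ∈ Finset.univ.filter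
             (fun i : Fin p => k ≤ (i : ℕ) ∧ (i : ℕ) < p₀), Λ i
           < ∑ i ∈ Finset.univ.filter
             (fun i : Fin p => k ≤ (i : ℕ) ∧ (i : ℕ) < p₀), |βOLS (τ i)|) ∧
       (∀ k : ℕ, p₀ ≤ k → k < p →
         ∑ i ∈ Finset.univ.filter
             (fun i : Fin p => p₀ ≤ (i : ℕ) ∧ (i : ℕ) ≤ k), |βOLS (τ i)|
           ≤ (1 / (n : ℝ)) * ∑ i ∈ Finset.univ.filter
             (fun i : Fin p => p₀ ≤ (i : ℕ) ∧ (i : ℕ) ≤ k), Λ i)) := by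
  have hn' : (0:ℝ) < (n:ℝ) := Nat.cast_pos.2 hn
  have hnne : (n:ℝ) ≠ 0 := ne_of_gt hn'
  -- step 1 : the objective decomposes as a constant plus `Fo`
  have hXtY : Xᵀ *ᵥ Y = (n:ℝ) • βOLS := by
    rw [hOLS, smul_smul, mul_one_div, div_self hnne, one_smul]
  have hdq : ∀ b : Fin p → ℝ, ∑ i, (Y i - (X *ᵥ b) i) ^ 2
      = ∑ i, Y i ^ 2 - 2 * ((n:ℝ) * ∑ j, βOLS j * b j) + (n:ℝ) * ∑ j, b j ^ 2 := by
    intro b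
    have hYZ : ∑ i, Y i * (X *ᵥ b) i = (n:ℝ) * ∑ j, βOLS j * b j := by
      have h1 : ∑ i, Y i * (X *ᵥ b) i = Y ⬝ᵥ (X *ᵥ b) := rfl
      rw [h1, dotProduct_mulVec, ← mulVec_transpose, hXtY, smul_dotProduct]
      rfl
    have hZZ : ∑ i, ((X *ᵥ b) i) ^ 2 = (n:ℝ) * ∑ j, b j ^ 2 := by
      have h1 : ∑ i, ((X *ᵥ b) i) ^ 2 = (X *ᵥ b) ⬝ᵥ (X *ᵥ b) := by
        simp [dotProduct, sq]
      rw [h1, dotProduct_mulVec, ← mulVec_transpose, mulVec_mulVec, hX,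
        smul_mulVec, one_mulVec, smul_dotProduct]
      have : βS ⬝ᵥ βS = ∑ j, βS j ^ 2 := by simp [dotProduct, sq]
      simp only [smul_eq_mul]
      congr 1
      simp [dotProduct, sq]
    have hexp : ∑ i, (Y i - (X *ᵥ b) i) ^ 2
        = ∑ i, Y i ^ 2 - 2 * ∑ i, (Y i * (X *ᵥ b) i) + ∑ i, ((X *ᵥ b) i) ^ 2 := by
      rw [Finset.mul_sum, ← Finset.sum_sub_distrib, ← Finset.sum_add_distrib]
      exact Finset.sum_congr rfl fun i _ => by ring
    rw [hexp, hYZ, hZZ]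
  have hobj : ∀ c : Fin p → ℝ, slopeObj X Y Λ c
      = (1/2 * ∑ i, Y i ^ 2 - (n:ℝ)/2 * ∑ j, βOLS j ^ 2) + Fo (n:ℝ) Λ βOLS c := by
    intro c
    have hq2 : ∑ j, (c j - βOLS j) ^ 2
        = ∑ j, c j ^ 2 - 2 * ∑ j, βOLS j * c j + ∑ j, βOLS j ^ 2 := by
      rw [Finset.mul_sum, ← Finset.sum_sub_distrib, ← Finset.sum_add_distrib]
      exact Finset.sum_congr rfl fun j _ => by ring
    rw [slopeObj, Fo, hdq c, hq2]
    ring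
  have hFmin : ∀ b, Fo (n:ℝ) Λ βOLS βS ≤ Fo (n:ℝ) Λ βOLS b := by
    intro b
    have h := hβS b
    rw [hobj, hobj] at h
    linarith
  -- step 2 : reduction to the sorted problem
  set u : Fin p → ℝ := fun j => |βOLS (τ j)| with hu
  set v : Fin p → ℝ := fun j => |βS (τ j)| with hv
  have hu0 : ∀ j, 0 ≤ u j := fun j => abs_nonneg _
  have hv0 : ∀ j, 0 ≤ v j := fun j => abs_nonneg _
  have habsu : ∀ j, |u j| = u j := fun j => abs_of_nonneg (hu0 j)
  have habsv : ∀ j, |v j| = v j := fun j => abs_of_nonneg (hv0 j)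
  have huanti : Antitone u := fun a b hab => hτ a b hab
  have hGmin : ∀ c, Fo (n:ℝ) Λ u v ≤ Fo (n:ℝ) Λ u c := fun c => by
    rw [hu, hv]; exact fo_reduce hn' hFmin τ c
  have hvanti : Antitone v := by
    intro a b hab
    rcases eq_or_lt_of_le (huanti hab) with heq | hlt
    · rcases eq_or_ne a b with rfl | hne
      · exact le_rfl
      · have hββ : |u a| = |u b| := by rw [habsu, habsu, heq]
        have h := fo_tie hn' hΛnonneg hGmin hne hββ
        rw [habsv, habsv] at h
        exact h.ge
    · have h := fo_monovary hn' hGmin a b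
      rw [habsv, habsv, habsu, habsu] at h
      nlinarith
  have key : ∀ c : Fin p → ℝ, Antitone c → (∀ i, 0 ≤ c i) →
      0 ≤ (n:ℝ) * ∑ i, (v i - u i) * (c i - v i) + ∑ i, Λ i * (c i - v i) := by
    intro c hc hc0
    have h := fo_vi hn' hΛnonneg hGmin c
    rw [slopeNorm_eq_sum hΛanti hc hc0, slopeNorm_eq_sum hΛanti hvanti hv0] at h
    have hh : ∑ i, Λ i * c i - ∑ i, Λ i * v i = ∑ i, Λ i * (c i - v i) := by
      rw [← Finset.sum_sub_distrib]
      exact Finset.sum_congr rfl fun i _ => by ring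
    rw [hh] at h
    exact h
  have hεex : ∃ ε : ℝ, 0 < ε ∧ ∀ a : Fin p, v a ≠ 0 → ε < v a := by
    rcases Finset.eq_empty_or_nonempty (Finset.univ.filter fun a : Fin p => v a ≠ 0)
      with he | hne
    · exact ⟨1, one_pos, fun a ha =>
        absurd (Finset.mem_filter.2 ⟨Finset.mem_univ a, ha⟩)
          (he ▸ Finset.notMem_empty a)⟩
    · obtain ⟨a₀, ha₀mem, ha₀⟩ := Finset.exists_min_image _ v hne
      have h0 : 0 < v a₀ :=
        lt_of_le_of_ne (hv0 a₀) (Ne.symm (Finset.mem_filter.1 ha₀mem).2)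
      refine ⟨v a₀ / 2, by linarith, fun a ha => ?_⟩
      have := ha₀ a (Finset.mem_filter.2 ⟨Finset.mem_univ a, ha⟩)
      linarith
  have hτsplit : (∀ i j : Fin p, (i : ℕ) < p₀ → p₀ ≤ (j : ℕ) → |βOLS j| < |βOLS i|) →
      ∀ j : Fin p, (((τ j : Fin p) : ℕ) < p₀ ↔ (j : ℕ) < p₀) := by
    intro ha
    have step1 : ∀ j : Fin p, p₀ ≤ (j : ℕ) → p₀ ≤ ((τ j : Fin p) : ℕ) := by
      by_contra hcon
      push_neg at hcon
      obtain ⟨j, hj, hτj⟩ := hcon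
      have hex : ∃ j' : Fin p, (j' : ℕ) < p₀ ∧ p₀ ≤ ((τ j' : Fin p) : ℕ) := by
        by_contra hcon2
        push_neg at hcon2
        set A : Finset (Fin p) := Finset.univ.filter (fun x : Fin p => (x:ℕ) < p₀) with hA
        have hjA : j ∉ A := by simp only [hA, Finset.mem_filter]; omega
        have himg : (insert j A).image τ ⊆ A := by
          intro x hx
          simp only [Finset.mem_image, Finset.mem_insert] at hx
          obtain ⟨y, hy, rfl⟩ := hx
          rcases hy with rfl | hyA
          · simp only [hA, Finset.mem_filter]
            exact ⟨Finset.mem_univ _, hτj⟩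
          · simp only [hA, Finset.mem_filter] at hyA ⊢
            exact ⟨Finset.mem_univ _, hcon2 y hyA.2⟩
        have hcard : (insert j A).card = A.card + 1 := Finset.card_insert_of_notMem hjA
        have hle := Finset.card_le_card himg
        rw [Finset.card_image_of_injective _ τ.injective, hcard] at hle
        omega
      obtain ⟨j', hj'1, hj'2⟩ := hex
      have hle : j' ≤ j := by rw [Fin.le_def]; omega
      have h1 := hτ j' j hle
      have h2 := ha (τ j) (τ j') hτj hj'2
      linarith
    have step2 : ∀ j : Fin p, (j : ℕ) < p₀ → ((τ j : Fin p) : ℕ) < p₀ := by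
      intro j hj
      by_contra hcon
      push_neg at hcon
      set S2 : Finset (Fin p) := Finset.univ.filter (fun x : Fin p => p₀ ≤ (x:ℕ)) with hS
      have hjS : j ∉ S2 := by simp only [hS, Finset.mem_filter]; omega
      have himg : (insert j S2).image τ ⊆ S2 := by
        intro x hx
        simp only [Finset.mem_image, Finset.mem_insert] at hx
        obtain ⟨y, hy, rfl⟩ := hx
        rcases hy with rfl | hyS
        · simp only [hS, Finset.mem_filter]
          exact ⟨Finset.mem_univ _, hcon⟩
        · simp only [hS, Finset.mem_filter] at hyS ⊢
          exact ⟨Finset.mem_univ _, step1 y hyS.2⟩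
      have hcard : (insert j S2).card = S2.card + 1 := Finset.card_insert_of_notMem hjS
      have hle := Finset.card_le_card himg
      rw [Finset.card_image_of_injective _ τ.injective, hcard] at hle
      omega
    intro j
    constructor
    · intro h
      by_contra hcn
      push_neg at hcn
      exact absurd (step1 j hcn) (by omega)
    · exact step2 j
  -- step 3 : the equivalence
  constructor
  · -- forward direction
    intro hsupp
    have ha : ∀ i j : Fin p, (i:ℕ) < p₀ → p₀ ≤ (j:ℕ) → |βOLS j| < |βOLS i| := by
      intro i j hi hj
      have hij : i ≠ j := fun h => by rw [h] at hi; omega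
      have hbsi : βS i ≠ 0 := fun h => by have := (hsupp i).1 h; omega
      have hbsj : βS j = 0 := (hsupp j).2 hj
      have hm := fo_monovary hn' hFmin i j
      rw [hbsj, abs_zero] at hm
      have hpos : 0 < |βS i| := abs_pos.2 hbsi
      have hle : |βOLS j| ≤ |βOLS i| := by nlinarith
      rcases lt_or_eq_of_le hle with h | h
      · exact h
      · exfalso
        have ht := fo_tie hn' hΛnonneg hFmin hij h.symm
        rw [hbsj, abs_zero] at ht
        exact hbsi (abs_eq_zero.1 ht)
    have hsplit := hτsplit ha
    have hvz : ∀ jj : Fin p, p₀ ≤ (jj:ℕ) → v jj = 0 := by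
      intro jj hjj
      have h1 : ¬ (((τ jj : Fin p):ℕ) < p₀) := fun hh => by
        have := (hsplit jj).1 hh; omega
      have h2 : βS (τ jj) = 0 := (hsupp (τ jj)).2 (by omega)
      simp only [hv]
      rw [h2, abs_zero]
    have hvp : ∀ jj : Fin p, (jj:ℕ) < p₀ → 0 < v jj := by
      intro jj hjj
      have h1 : ((τ jj : Fin p):ℕ) < p₀ := (hsplit jj).2 hjj
      have h2 : βS (τ jj) ≠ 0 := fun h => by have := (hsupp (τ jj)).1 h; omega
      have h3 : 0 < |βS (τ jj)| := abs_pos.2 h2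
      simpa [hv] using h3
    refine ⟨ha, ?_, ?_⟩
    · -- condition (b)
      intro k hk
      obtain ⟨ε, hε, hεlt⟩ := hεex
      set c : Fin p → ℝ :=
        fun j => v j - (if k ≤ (j:ℕ) ∧ (j:ℕ) < p₀ then ε else 0) with hc
      have hcx : ∀ i : Fin p,
          c i - v i = -(if k ≤ (i:ℕ) ∧ (i:ℕ) < p₀ then ε else 0) := fun i => by
        simp only [hc]; ring
      have hc0 : ∀ i, 0 ≤ c i := by
        intro i
        simp only [hc]
        split
        · rename_i hPi
          have := hεlt i (ne_of_gt (hvp i hPi.2))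
          linarith
        · have := hv0 i; linarith
      have hcanti : Antitone c := by
        intro a b hab
        have hvab := hvanti hab
        have habn : (a:ℕ) ≤ (b:ℕ) := hab
        simp only [hc]
        by_cases hPa : k ≤ (a:ℕ) ∧ (a:ℕ) < p₀ <;>
          by_cases hPb : k ≤ (b:ℕ) ∧ (b:ℕ) < p₀
        · simp only [if_pos hPa, if_pos hPb]; linarith
        · simp only [if_pos hPa, if_neg hPb]
          have hbge : p₀ ≤ (b:ℕ) := by omega
          have h1 := hvz b hbge
          have h2 := hεlt a (ne_of_gt (hvp a hPa.2))
          linarith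
        · simp only [if_neg hPa, if_pos hPb]; linarith
        · simp only [if_neg hPa, if_neg hPb]; linarith
      have hkey := key c hcanti hc0
      have h1 : ∑ i, (v i - u i) * (c i - v i)
          = -(ε * ∑ i ∈ Finset.univ.filter
              (fun i : Fin p => k ≤ (i:ℕ) ∧ (i:ℕ) < p₀), (v i - u i)) := by
        calc ∑ i, (v i - u i) * (c i - v i)
            = ∑ i, -((v i - u i) * (if k ≤ (i:ℕ) ∧ (i:ℕ) < p₀ then ε else 0)) :=
              Finset.sum_congr rfl fun i _ => by rw [hcx i]; ring
          _ = -∑ i, (v i - u i) * (if k ≤ (i:ℕ) ∧ (i:ℕ) < p₀ then ε else 0) := by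
              rw [Finset.sum_neg_distrib]
          _ = _ := by rw [sum_mul_ite]
      have h2 : ∑ i, Λ i * (c i - v i)
          = -(ε * ∑ i ∈ Finset.univ.filter
              (fun i : Fin p => k ≤ (i:ℕ) ∧ (i:ℕ) < p₀), Λ i) := by
        calc ∑ i, Λ i * (c i - v i)
            = ∑ i, -(Λ i * (if k ≤ (i:ℕ) ∧ (i:ℕ) < p₀ then ε else 0)) :=
              Finset.sum_congr rfl fun i _ => by rw [hcx i]; ring
          _ = -∑ i, Λ i * (if k ≤ (i:ℕ) ∧ (i:ℕ) < p₀ then ε else 0) := by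
              rw [Finset.sum_neg_distrib]
          _ = _ := by rw [sum_mul_ite]
      rw [h1, h2] at hkey
      have hS1 : ∑ i ∈ Finset.univ.filter
            (fun i : Fin p => k ≤ (i:ℕ) ∧ (i:ℕ) < p₀), (v i - u i)
          = ∑ i ∈ Finset.univ.filter
            (fun i : Fin p => k ≤ (i:ℕ) ∧ (i:ℕ) < p₀), v i
          - ∑ i ∈ Finset.univ.filter
            (fun i : Fin p => k ≤ (i:ℕ) ∧ (i:ℕ) < p₀), u i := Finset.sum_sub_distrib _ _
      have hvsum : 0 < ∑ i ∈ Finset.univ.filter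
          (fun i : Fin p => k ≤ (i:ℕ) ∧ (i:ℕ) < p₀), v i := by
        refine Finset.sum_pos (fun i hi => hvp i (Finset.mem_filter.1 hi).2.2) ?_
        exact ⟨⟨k, lt_trans hk hp₀⟩,
          Finset.mem_filter.2 ⟨Finset.mem_univ _, le_rfl, hk⟩⟩
      have hfin : ∑ i ∈ Finset.univ.filter
            (fun i : Fin p => k ≤ (i:ℕ) ∧ (i:ℕ) < p₀), Λ i
          < (n:ℝ) * ∑ i ∈ Finset.univ.filter
            (fun i : Fin p => k ≤ (i:ℕ) ∧ (i:ℕ) < p₀), u i := by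
        rw [hS1] at hkey
        nlinarith [hkey, hε, hn', hvsum, mul_pos hn' hvsum]
      calc (1/(n:ℝ)) * ∑ i ∈ Finset.univ.filter
            (fun i : Fin p => k ≤ (i:ℕ) ∧ (i:ℕ) < p₀), Λ i
          < (1/(n:ℝ)) * ((n:ℝ) * ∑ i ∈ Finset.univ.filter
            (fun i : Fin p => k ≤ (i:ℕ) ∧ (i:ℕ) < p₀), u i) := by
            apply mul_lt_mul_of_pos_left hfin; positivity
        _ = ∑ i ∈ Finset.univ.filter
            (fun i : Fin p => k ≤ (i:ℕ) ∧ (i:ℕ) < p₀), u i := by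
            field_simp
    · -- condition (c)
      intro k hkp₀ hkp
      obtain ⟨ε, hε, hεlt⟩ := hεex
      set c : Fin p → ℝ :=
        fun j => v j + (if p₀ ≤ (j:ℕ) ∧ (j:ℕ) ≤ k then ε else 0) with hc
      have hcx : ∀ i : Fin p,
          c i - v i = (if p₀ ≤ (i:ℕ) ∧ (i:ℕ) ≤ k then ε else 0) := fun i => by
        simp only [hc]; ring
      have hc0 : ∀ i, 0 ≤ c i := by
        intro i
        simp only [hc]
        split <;> [linarith [hv0 i, hε]; linarith [hv0 i]]
      have hcanti : Antitone c := by
        intro a b hab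
        have hvab := hvanti hab
        have habn : (a:ℕ) ≤ (b:ℕ) := hab
        simp only [hc]
        by_cases hPa : p₀ ≤ (a:ℕ) ∧ (a:ℕ) ≤ k <;>
          by_cases hPb : p₀ ≤ (b:ℕ) ∧ (b:ℕ) ≤ k
        · simp only [if_pos hPa, if_pos hPb]; linarith
        · simp only [if_pos hPa, if_neg hPb]
          have h1 := hvz b (by omega)
          have h2 := hv0 a
          linarith
        · simp only [if_neg hPa, if_pos hPb]
          have halt : (a:ℕ) < p₀ := by omega
          have h1 := hvz b hPb.1
          have h2 := hεlt a (ne_of_gt (hvp a halt))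
          linarith
        · simp only [if_neg hPa, if_neg hPb]; linarith
      have hkey := key c hcanti hc0
      have h1 : ∑ i, (v i - u i) * (c i - v i)
          = ε * ∑ i ∈ Finset.univ.filter
              (fun i : Fin p => p₀ ≤ (i:ℕ) ∧ (i:ℕ) ≤ k), (v i - u i) := by
        calc ∑ i, (v i - u i) * (c i - v i)
            = ∑ i, (v i - u i) * (if p₀ ≤ (i:ℕ) ∧ (i:ℕ) ≤ k then ε else 0) :=
              Finset.sum_congr rfl fun i _ => by rw [hcx i]
          _ = _ := by rw [sum_mul_ite]
      have h2 : ∑ i, Λ i * (c i - v i)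
          = ε * ∑ i ∈ Finset.univ.filter
              (fun i : Fin p => p₀ ≤ (i:ℕ) ∧ (i:ℕ) ≤ k), Λ i := by
        calc ∑ i, Λ i * (c i - v i)
            = ∑ i, Λ i * (if p₀ ≤ (i:ℕ) ∧ (i:ℕ) ≤ k then ε else 0) :=
              Finset.sum_congr rfl fun i _ => by rw [hcx i]
          _ = _ := by rw [sum_mul_ite]
      rw [h1, h2] at hkey
      have hS1 : ∑ i ∈ Finset.univ.filter
            (fun i : Fin p => p₀ ≤ (i:ℕ) ∧ (i:ℕ) ≤ k), (v i - u i)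
          = -∑ i ∈ Finset.univ.filter
            (fun i : Fin p => p₀ ≤ (i:ℕ) ∧ (i:ℕ) ≤ k), u i := by
        rw [← Finset.sum_neg_distrib]
        refine Finset.sum_congr rfl fun i hi => ?_
        rw [hvz i (Finset.mem_filter.1 hi).2.1]
        ring
      rw [hS1] at hkey
      have hfin : (n:ℝ) * ∑ i ∈ Finset.univ.filter
            (fun i : Fin p => p₀ ≤ (i:ℕ) ∧ (i:ℕ) ≤ k), u i
          ≤ ∑ i ∈ Finset.univ.filter
            (fun i : Fin p => p₀ ≤ (i:ℕ) ∧ (i:ℕ) ≤ k), Λ i := by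
        nlinarith [hkey, hε]
      calc ∑ i ∈ Finset.univ.filter
            (fun i : Fin p => p₀ ≤ (i:ℕ) ∧ (i:ℕ) ≤ k), u i
          = (1/(n:ℝ)) * ((n:ℝ) * ∑ i ∈ Finset.univ.filter
            (fun i : Fin p => p₀ ≤ (i:ℕ) ∧ (i:ℕ) ≤ k), u i) := by
            field_simp
        _ ≤ (1/(n:ℝ)) * ∑ i ∈ Finset.univ.filter
            (fun i : Fin p => p₀ ≤ (i:ℕ) ∧ (i:ℕ) ≤ k), Λ i := by
            apply mul_le_mul_of_nonneg_left hfin; positivity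
  · -- backward direction
    rintro ⟨ha, hb, hcnd⟩
    have hsplit := hτsplit ha
    have hvz : ∀ jj : Fin p, p₀ ≤ (jj:ℕ) → v jj = 0 := by
      by_contra hcon
      push_neg at hcon
      obtain ⟨jj, hjjge, hjjne⟩ := hcon
      set S' : Finset (Fin p) := Finset.univ.filter (fun a : Fin p => v a ≠ 0) with hS'
      have hjjmem : jj ∈ S' := Finset.mem_filter.2 ⟨Finset.mem_univ _, hjjne⟩
      have hne : S'.Nonempty := ⟨jj, hjjmem⟩
      set ks : Fin p := S'.max' hne with hks
      have hksmem : ks ∈ S' := S'.max'_mem hne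
      have hksne : v ks ≠ 0 := (Finset.mem_filter.1 hksmem).2
      have hkspos : 0 < v ks := lt_of_le_of_ne (hv0 ks) (Ne.symm hksne)
      have hjjle : jj ≤ ks := S'.le_max' jj hjjmem
      have hjjlen : (jj:ℕ) ≤ (ks:ℕ) := hjjle
      have hksge : p₀ ≤ (ks:ℕ) := by omega
      have hafter : ∀ x : Fin p, (ks:ℕ) < (x:ℕ) → v x = 0 := by
        intro x hx
        by_contra hxne
        have h1 : x ≤ ks := S'.le_max' x (Finset.mem_filter.2 ⟨Finset.mem_univ _, hxne⟩)
        have h2 : (x:ℕ) ≤ (ks:ℕ) := h1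
        omega
      have hvB : ∀ x : Fin p, (x:ℕ) ≤ (ks:ℕ) → v ks ≤ v x := by
        intro x hx
        exact hvanti (show x ≤ ks from hx)
      set ε : ℝ := v ks / 2 with hεdef
      have hε : 0 < ε := by rw [hεdef]; linarith
      set c : Fin p → ℝ :=
        fun j => v j - (if p₀ ≤ (j:ℕ) ∧ (j:ℕ) ≤ (ks:ℕ) then ε else 0) with hc
      have hcx : ∀ i : Fin p,
          c i - v i = -(if p₀ ≤ (i:ℕ) ∧ (i:ℕ) ≤ (ks:ℕ) then ε else 0) := fun i => by
        simp only [hc]; ring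
      have hc0 : ∀ i, 0 ≤ c i := by
        intro i
        simp only [hc]
        split
        · rename_i hPi
          have := hvB i hPi.2
          rw [hεdef]; linarith
        · have := hv0 i; linarith
      have hcanti : Antitone c := by
        intro a b hab
        have hvab := hvanti hab
        have habn : (a:ℕ) ≤ (b:ℕ) := hab
        simp only [hc]
        by_cases hPa : p₀ ≤ (a:ℕ) ∧ (a:ℕ) ≤ (ks:ℕ) <;>
          by_cases hPb : p₀ ≤ (b:ℕ) ∧ (b:ℕ) ≤ (ks:ℕ)
        · simp only [if_pos hPa, if_pos hPb]; linarith
        · simp only [if_pos hPa, if_neg hPb]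
          have h1 : v b = 0 := hafter b (by omega)
          have h2 := hvB a hPa.2
          rw [hεdef]; linarith
        · simp only [if_neg hPa, if_pos hPb]; linarith
        · simp only [if_neg hPa, if_neg hPb]; linarith
      have hkey := key c hcanti hc0
      have h1 : ∑ i, (v i - u i) * (c i - v i)
          = -(ε * ∑ i ∈ Finset.univ.filter
              (fun i : Fin p => p₀ ≤ (i:ℕ) ∧ (i:ℕ) ≤ (ks:ℕ)), (v i - u i)) := by
        calc ∑ i, (v i - u i) * (c i - v i)
            = ∑ i, -((v i - u i) * (if p₀ ≤ (i:ℕ) ∧ (i:ℕ) ≤ (ks:ℕ) then ε else 0)) :=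
              Finset.sum_congr rfl fun i _ => by rw [hcx i]; ring
          _ = -∑ i, (v i - u i) * (if p₀ ≤ (i:ℕ) ∧ (i:ℕ) ≤ (ks:ℕ) then ε else 0) := by
              rw [Finset.sum_neg_distrib]
          _ = _ := by rw [sum_mul_ite]
      have h2 : ∑ i, Λ i * (c i - v i)
          = -(ε * ∑ i ∈ Finset.univ.filter
              (fun i : Fin p => p₀ ≤ (i:ℕ) ∧ (i:ℕ) ≤ (ks:ℕ)), Λ i) := by
        calc ∑ i, Λ i * (c i - v i)
            = ∑ i, -(Λ i * (if p₀ ≤ (i:ℕ) ∧ (i:ℕ) ≤ (ks:ℕ) then ε else 0)) :=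
              Finset.sum_congr rfl fun i _ => by rw [hcx i]; ring
          _ = -∑ i, Λ i * (if p₀ ≤ (i:ℕ) ∧ (i:ℕ) ≤ (ks:ℕ) then ε else 0) := by
              rw [Finset.sum_neg_distrib]
          _ = _ := by rw [sum_mul_ite]
      rw [h1, h2] at hkey
      have hS1 : ∑ i ∈ Finset.univ.filter
            (fun i : Fin p => p₀ ≤ (i:ℕ) ∧ (i:ℕ) ≤ (ks:ℕ)), (v i - u i)
          = ∑ i ∈ Finset.univ.filter
            (fun i : Fin p => p₀ ≤ (i:ℕ) ∧ (i:ℕ) ≤ (ks:ℕ)), v i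
          - ∑ i ∈ Finset.univ.filter
            (fun i : Fin p => p₀ ≤ (i:ℕ) ∧ (i:ℕ) ≤ (ks:ℕ)), u i := Finset.sum_sub_distrib _ _
      have hvsum : 0 < ∑ i ∈ Finset.univ.filter
          (fun i : Fin p => p₀ ≤ (i:ℕ) ∧ (i:ℕ) ≤ (ks:ℕ)), v i := by
        refine Finset.sum_pos (fun i hi => ?_) ?_
        · have := hvB i (Finset.mem_filter.1 hi).2.2
          linarith
        · exact ⟨ks, Finset.mem_filter.2 ⟨Finset.mem_univ _, hksge, le_rfl⟩⟩
      have hfin : ∑ i ∈ Finset.univ.filter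
            (fun i : Fin p => p₀ ≤ (i:ℕ) ∧ (i:ℕ) ≤ (ks:ℕ)), Λ i
          < (n:ℝ) * ∑ i ∈ Finset.univ.filter
            (fun i : Fin p => p₀ ≤ (i:ℕ) ∧ (i:ℕ) ≤ (ks:ℕ)), u i := by
        rw [hS1] at hkey
        nlinarith [hkey, hε, hn', hvsum, mul_pos hn' hvsum]
      have hcontra := hcnd (ks:ℕ) hksge ks.isLt
      have : (1/(n:ℝ)) * ∑ i ∈ Finset.univ.filter
            (fun i : Fin p => p₀ ≤ (i:ℕ) ∧ (i:ℕ) ≤ (ks:ℕ)), Λ i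
          < ∑ i ∈ Finset.univ.filter
            (fun i : Fin p => p₀ ≤ (i:ℕ) ∧ (i:ℕ) ≤ (ks:ℕ)), u i := by
        calc (1/(n:ℝ)) * ∑ i ∈ Finset.univ.filter
              (fun i : Fin p => p₀ ≤ (i:ℕ) ∧ (i:ℕ) ≤ (ks:ℕ)), Λ i
            < (1/(n:ℝ)) * ((n:ℝ) * ∑ i ∈ Finset.univ.filter
              (fun i : Fin p => p₀ ≤ (i:ℕ) ∧ (i:ℕ) ≤ (ks:ℕ)), u i) := by
              apply mul_lt_mul_of_pos_left hfin; positivity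
          _ = _ := by field_simp
      linarith
    have hvp : ∀ jj : Fin p, (jj:ℕ) < p₀ → 0 < v jj := by
      by_contra hcon
      push_neg at hcon
      obtain ⟨jj, hjlt, hjle⟩ := hcon
      have hjz : v jj = 0 := le_antisymm hjle (hv0 jj)
      set S' : Finset (Fin p) := Finset.univ.filter (fun a : Fin p => v a = 0) with hS'
      have hne : S'.Nonempty := ⟨jj, Finset.mem_filter.2 ⟨Finset.mem_univ _, hjz⟩⟩
      set j₀ : Fin p := S'.min' hne with hj₀
      have hj₀mem : j₀ ∈ S' := S'.min'_mem hne
      have hj₀z : v j₀ = 0 := (Finset.mem_filter.1 hj₀mem).2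
      have hj₀le : j₀ ≤ jj := S'.min'_le jj (Finset.mem_filter.2 ⟨Finset.mem_univ _, hjz⟩)
      have hj₀len : (j₀:ℕ) ≤ (jj:ℕ) := hj₀le
      have hj₀lt : (j₀:ℕ) < p₀ := by omega
      have hafter : ∀ x : Fin p, (j₀:ℕ) ≤ (x:ℕ) → v x = 0 := by
        intro x hx
        have h1 : v x ≤ v j₀ := hvanti (show j₀ ≤ x from hx)
        rw [hj₀z] at h1
        exact le_antisymm h1 (hv0 x)
      have hbefore : ∀ x : Fin p, (x:ℕ) < (j₀:ℕ) → v x ≠ 0 := by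
        intro x hx hxz
        have h1 : j₀ ≤ x := S'.min'_le x (Finset.mem_filter.2 ⟨Finset.mem_univ _, hxz⟩)
        have h2 : (j₀:ℕ) ≤ (x:ℕ) := h1
        omega
      obtain ⟨ε, hε, hεlt⟩ := hεex
      set c : Fin p → ℝ :=
        fun j => v j + (if (j₀:ℕ) ≤ (j:ℕ) ∧ (j:ℕ) < p₀ then ε else 0) with hc
      have hcx : ∀ i : Fin p,
          c i - v i = (if (j₀:ℕ) ≤ (i:ℕ) ∧ (i:ℕ) < p₀ then ε else 0) := fun i => by
        simp only [hc]; ring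
      have hc0 : ∀ i, 0 ≤ c i := by
        intro i
        simp only [hc]
        split <;> [linarith [hv0 i, hε]; linarith [hv0 i]]
      have hcanti : Antitone c := by
        intro a b hab
        have hvab := hvanti hab
        have habn : (a:ℕ) ≤ (b:ℕ) := hab
        simp only [hc]
        by_cases hPa : (j₀:ℕ) ≤ (a:ℕ) ∧ (a:ℕ) < p₀ <;>
          by_cases hPb : (j₀:ℕ) ≤ (b:ℕ) ∧ (b:ℕ) < p₀
        · simp only [if_pos hPa, if_pos hPb]; linarith
        · simp only [if_pos hPa, if_neg hPb]
          have h1 : v b = 0 := hvz b (by omega)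
          have h2 : v a = 0 := hafter a hPa.1
          linarith
        · simp only [if_neg hPa, if_pos hPb]
          have halt : (a:ℕ) < (j₀:ℕ) := by omega
          have h1 : v b = 0 := hafter b hPb.1
          have h2 := hεlt a (hbefore a halt)
          linarith
        · simp only [if_neg hPa, if_neg hPb]; linarith
      have hkey := key c hcanti hc0
      have h1 : ∑ i, (v i - u i) * (c i - v i)
          = ε * ∑ i ∈ Finset.univ.filter
              (fun i : Fin p => (j₀:ℕ) ≤ (i:ℕ) ∧ (i:ℕ) < p₀), (v i - u i) := by
        calc ∑ i, (v i - u i) * (c i - v i)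
            = ∑ i, (v i - u i) * (if (j₀:ℕ) ≤ (i:ℕ) ∧ (i:ℕ) < p₀ then ε else 0) :=
              Finset.sum_congr rfl fun i _ => by rw [hcx i]
          _ = _ := by rw [sum_mul_ite]
      have h2 : ∑ i, Λ i * (c i - v i)
          = ε * ∑ i ∈ Finset.univ.filter
              (fun i : Fin p => (j₀:ℕ) ≤ (i:ℕ) ∧ (i:ℕ) < p₀), Λ i := by
        calc ∑ i, Λ i * (c i - v i)
            = ∑ i, Λ i * (if (j₀:ℕ) ≤ (i:ℕ) ∧ (i:ℕ) < p₀ then ε else 0) :=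
              Finset.sum_congr rfl fun i _ => by rw [hcx i]
          _ = _ := by rw [sum_mul_ite]
      rw [h1, h2] at hkey
      have hS1 : ∑ i ∈ Finset.univ.filter
            (fun i : Fin p => (j₀:ℕ) ≤ (i:ℕ) ∧ (i:ℕ) < p₀), (v i - u i)
          = -∑ i ∈ Finset.univ.filter
            (fun i : Fin p => (j₀:ℕ) ≤ (i:ℕ) ∧ (i:ℕ) < p₀), u i := by
        rw [← Finset.sum_neg_distrib]
        refine Finset.sum_congr rfl fun i hi => ?_
        rw [hafter i (Finset.mem_filter.1 hi).2.1]
        ring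
      rw [hS1] at hkey
      have hfin : (n:ℝ) * ∑ i ∈ Finset.univ.filter
            (fun i : Fin p => (j₀:ℕ) ≤ (i:ℕ) ∧ (i:ℕ) < p₀), u i
          ≤ ∑ i ∈ Finset.univ.filter
            (fun i : Fin p => (j₀:ℕ) ≤ (i:ℕ) ∧ (i:ℕ) < p₀), Λ i := by
        nlinarith [hkey, hε]
      have hcontra := hb (j₀:ℕ) hj₀lt
      have : ∑ i ∈ Finset.univ.filter
            (fun i : Fin p => (j₀:ℕ) ≤ (i:ℕ) ∧ (i:ℕ) < p₀), u i
          ≤ (1/(n:ℝ)) * ∑ i ∈ Finset.univ.filter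
            (fun i : Fin p => (j₀:ℕ) ≤ (i:ℕ) ∧ (i:ℕ) < p₀), Λ i := by
        calc ∑ i ∈ Finset.univ.filter
              (fun i : Fin p => (j₀:ℕ) ≤ (i:ℕ) ∧ (i:ℕ) < p₀), u i
            = (1/(n:ℝ)) * ((n:ℝ) * ∑ i ∈ Finset.univ.filter
              (fun i : Fin p => (j₀:ℕ) ≤ (i:ℕ) ∧ (i:ℕ) < p₀), u i) := by
              field_simp
          _ ≤ _ := by apply mul_le_mul_of_nonneg_left hfin; positivity
      linarith
    intro i
    have hvi : v (τ.symm i) = |βS i| := by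
      simp only [hv]
      rw [Equiv.apply_symm_apply]
    have hiff := hsplit (τ.symm i)
    rw [Equiv.apply_symm_apply] at hiff
    constructor
    · intro h
      by_contra hge
      push_neg at hge
      have h1 := hvp (τ.symm i) (hiff.mp hge)
      rw [hvi, h, abs_zero] at h1
      exact lt_irrefl 0 h1
    · intro h
      have h1 : p₀ ≤ ((τ.symm i : Fin p):ℕ) := by
        by_contra hlt
        push_neg at hlt
        have := hiff.mpr hlt
        omega
      have h2 := hvz _ h1
      rw [hvi] at h2
      exact abs_eq_zero.1 h2
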